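/- arXiv:1303.4593 — 2 statements merged into one kernel-verified Lean document; each statement's English description precedes it below -/
import Mathlib

section
/- Every finite connected loopless multigraph G with an even number of vertices admits an odd edge coloring with at most 3 colors, i.e., χ'_o(G) ≤ 3. -/
/-- The simple graph underlying a loopless multigraph with edge multiplicity
function `m`: two distinct vertices are adjacent iff some edge joins them. -/
def multigraphSimple {V : Type*} (m : Sym2 V → ℕ) : SimpleGraph V :=
  SimpleGraph.fromRel (fun a b => 0 < m s(a, b))

/-- An odd edge coloring of the loopless multigraph with multiplicity function `m`
using `k` colors: the multiplicity of each edge is split among the `k` colors, and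
for each color `i` and vertex `v`, the number of edges of color `i` incident to `v`
is odd or zero. -/
def IsOddMultiColoring {V : Type*} [Fintype V] (m : Sym2 V → ℕ) {k : ℕ}
    (c : Sym2 V → Fin k → ℕ) : Prop :=
  (∀ e : Sym2 V, ∑ i, c e i = m e) ∧
    ∀ (i : Fin k) (v : V), Odd (∑ u, c s(v, u) i) ∨ (∑ u, c s(v, u) i) = 0

open Finset SimpleGraph

section aux
variable {V : Type*} [Fintype V] [DecidableEq V]

private lemma zmod2_zero_iff (n : ℕ) : (n : ZMod 2) = 0 ↔ Even n := by
  rw [ZMod.natCast_eq_zero_iff, Nat.even_iff]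
  omega

private lemma zmod2_one_iff (n : ℕ) : (n : ZMod 2) = 1 ↔ Odd n := by
  have h01 : ∀ z : ZMod 2, z = 0 ∨ z = 1 := by decide
  rw [← Nat.not_even_iff_odd, ← zmod2_zero_iff]
  rcases h01 (n : ZMod 2) with h | h <;> simp [h]

private lemma sum_ite_sym2 {a c : V} (hac : a ≠ c) (x : V) :
    (∑ u, if s(x,u) = s(a,c) then (1 : ZMod 2) else 0)
      = (if x = a then 1 else 0) + (if x = c then 1 else 0) := by
  have key : ∀ u : V, (if s(x,u) = s(a,c) then (1 : ZMod 2) else 0)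
      = (if x = a ∧ u = c then 1 else 0) + (if x = c ∧ u = a then 1 else 0) := by
    intro u
    simp only [Sym2.eq_iff]
    by_cases h1 : x = a ∧ u = c <;> by_cases h2 : x = c ∧ u = a
    · exact absurd (h1.1.symm.trans h2.1) hac
    · simp only [h1, h2]; simp [hac, hac.symm]
    · simp only [h1, h2]; simp [hac, hac.symm]
    · simp [h1, h2]
  rw [Finset.sum_congr rfl fun u _ => key u, Finset.sum_add_distrib]
  congr 1
  · by_cases hxa : x = a <;> simp [hxa]
  · by_cases hxc : x = c <;> simp [hxc]

private lemma walk_parity {G : SimpleGraph V} {a b : V} (p : G.Walk a b) (x : V) :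
    (∑ u, ((p.edges.count s(x,u) : ℕ) : ZMod 2))
      = (if x = a then 1 else 0) + (if x = b then 1 else 0) := by
  induction p with
  | nil =>
    simp only [Walk.edges_nil, List.count_nil, Nat.cast_zero, Finset.sum_const_zero]
    split_ifs
    · decide
    · simp
  | @cons a2 c2 b2 hadj q ih =>
    have key : ∀ u : V, ((((Walk.cons hadj q).edges.count s(x,u) : ℕ)) : ZMod 2)
        = ((q.edges.count s(x,u) : ℕ) : ZMod 2)
          + (if s(x,u) = s(a2,c2) then (1 : ZMod 2) else 0) := by
      intro u
      rw [Walk.edges_cons, List.count_cons]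
      by_cases he : s(x,u) = s(a2,c2)
      · simp [he]
      · simp [he, Ne.symm he]
    rw [Finset.sum_congr rfl (fun u _ => key u), Finset.sum_add_distrib, ih,
      sum_ite_sym2 hadj.ne x]
    have h2 : (if x = c2 then (1:ZMod 2) else 0) + (if x = c2 then (1:ZMod 2) else 0) = 0 := by
      split_ifs
      · decide
      · simp
    linear_combination h2


private lemma multigraphSimple_adj {m : Sym2 V → ℕ} {a b : V} :
    (multigraphSimple m).Adj a b ↔ a ≠ b ∧ 0 < m s(a,b) := by
  rw [multigraphSimple, SimpleGraph.fromRel_adj]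
  constructor
  · rintro ⟨hne, h | h⟩
    · exact ⟨hne, h⟩
    · exact ⟨hne, by rwa [Sym2.eq_swap] at h⟩
  · rintro ⟨hne, h⟩
    exact ⟨hne, Or.inl h⟩

private lemma multigraphSimple_edge {m : Sym2 V → ℕ} {e : Sym2 V}
    (he : e ∈ (multigraphSimple m).edgeSet) : 0 < m e := by
  induction e using Sym2.ind with
  | _ a b => exact (multigraphSimple_adj.mp he).2

private lemma path_first_edge {G : SimpleGraph V} {c d : V} (q : G.Walk c d) (hq : q.IsPath)
    (w : V) (hmem : s(c,w) ∈ q.edges) : w = q.getVert 1 := by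
  cases q with
  | nil => simp at hmem
  | @cons _ x _ hadj r =>
    rw [Walk.edges_cons, List.mem_cons] at hmem
    rw [Walk.cons_isPath_iff] at hq
    rcases hmem with h1 | h2
    · rw [Sym2.eq_iff] at h1
      rcases h1 with ⟨-, rfl⟩ | ⟨hcx, -⟩
      · rw [Walk.getVert_cons_succ, Walk.getVert_zero]
      · exact absurd hcx hadj.ne
    · exact absurd (r.fst_mem_support_of_mem_edges h2) hq.2

private lemma exists_odd_subgraph (m : Sym2 V → ℕ)
    (hconn : (multigraphSimple m).Connected) (heven : Even (Fintype.card V)) :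
    ∃ j : Sym2 V → ℕ, (∀ e, j e ≤ m e) ∧ (∀ v, Odd (∑ u, j s(v,u))) := by
  classical
  obtain ⟨r⟩ := hconn.nonempty
  have hreach : ∀ v : V, (multigraphSimple m).Reachable r v := fun v => hconn.preconnected r v
  set wv : ∀ v : V, (multigraphSimple m).Walk r v := fun v => (hreach v).some with hwv
  set J : Sym2 V → ZMod 2 := fun e => ∑ v, (((wv v).edges.count e : ℕ) : ZMod 2) with hJ
  refine ⟨fun e => if J e = 1 then 1 else 0, ?_, ?_⟩
  · intro e
    by_cases h : J e = 1
    · simp only [h, if_pos]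
      by_contra hme
      push_neg at hme
      have hm0 : m e = 0 := by omega
      have hall : ∀ v : V, (((wv v).edges.count e : ℕ) : ZMod 2) = 0 := by
        intro v
        have : e ∉ (wv v).edges := by
          intro hmem
          have := multigraphSimple_edge ((wv v).edges_subset_edgeSet hmem)
          omega
        rw [List.count_eq_zero_of_not_mem this]
        simp
      rw [hJ] at h
      simp only at h
      rw [Finset.sum_congr rfl (fun v _ => hall v)] at h
      simp at h
    · simp [h]
  · intro x
    rw [← zmod2_one_iff]
    have cast_j : ∀ e, (((if J e = 1 then 1 else 0 : ℕ)) : ZMod 2) = J e := by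
      intro e
      have h01 : ∀ z : ZMod 2, z = 0 ∨ z = 1 := by decide
      by_cases h : J e = 1
      · simp [h]
      · rcases h01 (J e) with h0 | h1
        · simp [h, h0]
        · exact absurd h1 h
    rw [Nat.cast_sum]
    rw [Finset.sum_congr rfl (fun u _ => cast_j s(x,u))]
    have swap : (∑ u, J s(x,u)) = ∑ v, ∑ u, (((wv v).edges.count s(x,u) : ℕ) : ZMod 2) := by
      rw [hJ]
      simp only
      rw [Finset.sum_comm]
    rw [swap, Finset.sum_congr rfl (fun v _ => walk_parity (wv v) x), Finset.sum_add_distrib]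
    rw [Finset.sum_const, Finset.sum_ite_eq]
    simp only [Finset.mem_univ, if_pos]
    obtain ⟨t, ht⟩ := heven
    rw [Finset.card_univ, ht, add_nsmul, CharTwo.add_self_eq_zero]
    simp


private lemma acyclic_case (h : Sym2 V → ℕ) (hdiag : ∀ v : V, h s(v,v) = 0)
    (h2 : ∀ e, h e < 2) (hz : ∃ e, h e ≠ 0)
    (hac : (multigraphSimple h).IsAcyclic)
    (IH : ∀ h' : Sym2 V → ℕ, (∑ e, h' e) < (∑ e, h e) → (∀ v : V, h' s(v,v) = 0) →
      ∃ A B X : Sym2 V → ℕ,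
        (∀ e, A e + B e + X e = h' e) ∧
        (∀ v, Odd (∑ u, A s(v,u)) ∨ (∑ u, A s(v,u)) = 0) ∧
        (∀ v, Odd (∑ u, B s(v,u)) ∨ (∑ u, B s(v,u)) = 0) ∧
        (∀ v, Even (∑ u, X s(v,u)))) :
    ∃ A B X : Sym2 V → ℕ,
      (∀ e, A e + B e + X e = h e) ∧
      (∀ v, Odd (∑ u, A s(v,u)) ∨ (∑ u, A s(v,u)) = 0) ∧
      (∀ v, Odd (∑ u, B s(v,u)) ∨ (∑ u, B s(v,u)) = 0) ∧
      (∀ v, Even (∑ u, X s(v,u))) := by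
  classical
  set G := multigraphSimple h with hG
  have hGadj : ∀ a b : V, G.Adj a b ↔ a ≠ b ∧ 0 < h s(a,b) := fun a b => multigraphSimple_adj
  rw [Sym2.exists] at hz
  obtain ⟨x0, y0, he1⟩ := hz
  have hxy : x0 ≠ y0 := by
    rintro rfl
    exact he1 (hdiag x0)
  have hadj0 : G.Adj x0 y0 := (hGadj _ _).mpr ⟨hxy, Nat.pos_of_ne_zero he1⟩
  -- choose a path of maximum length
  set P : ℕ → Prop := fun n => ∃ (a b : V) (q : G.Walk a b), q.IsPath ∧ q.length = n with hP
  have hP1 : P 1 := ⟨x0, y0, Walk.cons hadj0 Walk.nil,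
    by simp [Walk.cons_isPath_iff, hxy], rfl⟩
  have hbound : ∀ n, P n → n ≤ Fintype.card V := by
    rintro n ⟨a, b, q, hq, rfl⟩
    exact le_of_lt hq.length_lt
  set nmax := Nat.findGreatest P (Fintype.card V) with hnmax
  have h1max : 1 ≤ nmax := Nat.le_findGreatest (hbound 1 hP1) hP1
  have hmaxle : ∀ (c d : V) (q : G.Walk c d), q.IsPath → q.length ≤ nmax := by
    intro c d q hq
    exact Nat.le_findGreatest (hbound _ ⟨c, d, q, hq, rfl⟩) ⟨c, d, q, hq, rfl⟩
  have hPmax : P nmax := Nat.findGreatest_spec (hbound 1 hP1) hP1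
  obtain ⟨a, b, p, hp, hplen⟩ := hPmax
  cases p with
  | nil => simp at hplen; omega
  | @cons _ u _ hadj ptail =>
  rw [Walk.cons_isPath_iff] at hp
  obtain ⟨hptail, hanotin⟩ := hp
  have hplen' : ptail.length + 1 = nmax := by simpa using hplen
  set t := ptail.getVert 1 with ht
  -- every neighbor of a equals u
  have F1 : ∀ w, G.Adj a w → w = u := by
    intro w hw
    by_cases hws : w ∈ ptail.support
    · by_contra hwu
      have hr : (ptail.takeUntil w hws).IsPath := hptail.takeUntil hws
      have hpath2 : (Walk.cons hadj (ptail.takeUntil w hws)).IsPath := by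
        rw [Walk.cons_isPath_iff]
        exact ⟨hr, fun ha => hanotin (Walk.support_takeUntil_subset _ hws ha)⟩
      have hpath1 : (Walk.cons hw Walk.nil).IsPath := by
        simp [Walk.cons_isPath_iff, hw.ne]
      have heqp := hac.path_unique ⟨Walk.cons hw Walk.nil, hpath1⟩ ⟨_, hpath2⟩
      have hlen := congrArg (fun q : G.Path a w => q.1.length) heqp
      simp only [Walk.length_cons, Walk.length_nil] at hlen
      have h0 : (ptail.takeUntil w hws).length = 0 := by omega
      exact hwu (Walk.eq_of_length_eq_zero h0).symm
    · exfalso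
      have hwp : w ∉ (Walk.cons hadj ptail).support := by
        rw [Walk.support_cons]
        intro hmem
        rcases List.mem_cons.mp hmem with hmem1 | hmem2
        · exact hw.ne' hmem1
        · exact hws hmem2
      have hext : (Walk.cons hw.symm (Walk.cons hadj ptail)).IsPath := by
        rw [Walk.cons_isPath_iff]
        exact ⟨by rw [Walk.cons_isPath_iff]; exact ⟨hptail, hanotin⟩, hwp⟩
      have := hmaxle _ _ _ hext
      simp only [Walk.length_cons] at this
      omega
  -- every neighbor of u on ptail equals t
  have F2 : ∀ w, G.Adj u w → w ∈ ptail.support → w = t := by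
    intro w hw hws
    have hr : (ptail.takeUntil w hws).IsPath := hptail.takeUntil hws
    have hpath1 : (Walk.cons hw Walk.nil).IsPath := by
      simp [Walk.cons_isPath_iff, hw.ne]
    have heqp := hac.path_unique ⟨Walk.cons hw Walk.nil, hpath1⟩ ⟨_, hr⟩
    have hwalkeq : (Walk.cons hw Walk.nil) = ptail.takeUntil w hws :=
      congrArg Subtype.val heqp
    have hmem : s(u,w) ∈ (ptail.takeUntil w hws).edges := by
      rw [← hwalkeq]
      simp
    exact path_first_edge ptail hptail w (Walk.edges_takeUntil_subset ptail hws hmem)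
  -- off-path neighbors of u are leaves
  have F3 : ∀ w, G.Adj u w → w ≠ a → w ∉ ptail.support → ∀ z, G.Adj w z → z = u := by
    intro w hw hwa hws z hz
    by_contra hzu
    have hq3 : (Walk.cons hw.symm ptail).IsPath := by
      rw [Walk.cons_isPath_iff]; exact ⟨hptail, hws⟩
    by_cases hzs : z ∈ ptail.support
    · have hr : (ptail.takeUntil z hzs).IsPath := hptail.takeUntil hzs
      have hwr : w ∉ (ptail.takeUntil z hzs).support :=
        fun hmem => hws (Walk.support_takeUntil_subset _ hzs hmem)
      have hpath2 : (Walk.cons hw.symm (ptail.takeUntil z hzs)).reverse.IsPath := by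
        refine Walk.IsPath.reverse ?_
        rw [Walk.cons_isPath_iff]; exact ⟨hr, hwr⟩
      have hpath1 : (Walk.cons hz.symm Walk.nil).IsPath := by
        simp [Walk.cons_isPath_iff, hz.ne']
      have heqp := hac.path_unique ⟨Walk.cons hz.symm Walk.nil, hpath1⟩ ⟨_, hpath2⟩
      have hlen := congrArg (fun q : G.Path z w => q.1.length) heqp
      simp only [Walk.length_reverse, Walk.length_cons, Walk.length_nil] at hlen
      have h0 : (ptail.takeUntil z hzs).length = 0 := by omega
      exact hzu (Walk.eq_of_length_eq_zero h0).symm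
    · have hq4 : (Walk.cons hz.symm (Walk.cons hw.symm ptail)).IsPath := by
        rw [Walk.cons_isPath_iff]
        refine ⟨hq3, ?_⟩
        rw [Walk.support_cons]
        intro hmem
        rcases List.mem_cons.mp hmem with hmem1 | hmem2
        · exact hz.ne' hmem1
        · exact hzs hmem2
      have := hmaxle _ _ _ hq4
      simp only [Walk.length_cons] at this
      omega
  -- t is on ptail, a is not
  have htps : t ∈ ptail.support := by
    by_cases hlen1 : 1 ≤ ptail.length
    · rw [Walk.mem_support_iff_exists_getVert]
      exact ⟨1, rfl, hlen1⟩
    · have hteq : t = b := by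
        rw [ht]
        exact ptail.getVert_of_length_le (by omega)
      rw [hteq]
      exact Walk.end_mem_support _
  have hat : a ≠ t := fun hEq => hanotin (hEq ▸ htps)
  set K : Finset V := Finset.univ.filter (fun w => G.Adj u w ∧ w ≠ t) with hK
  have haK : a ∈ K := by
    rw [hK, Finset.mem_filter]
    exact ⟨Finset.mem_univ _, hadj.symm, hat⟩
  have huK : u ∉ K := by
    rw [hK, Finset.mem_filter]
    rintro ⟨-, hww, -⟩
    exact hww.ne rfl
  have hKadj : ∀ w ∈ K, G.Adj u w := by
    intro w hw
    rw [hK, Finset.mem_filter] at hw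
    exact hw.2.1
  have hKleaf : ∀ w ∈ K, ∀ z, G.Adj w z → z = u := by
    intro w hwK z hz
    have hwK' := hwK
    rw [hK, Finset.mem_filter] at hwK'
    obtain ⟨-, hw, hwt⟩ := hwK'
    by_cases hwa : w = a
    · subst hwa; exact F1 z hz
    · have hws : w ∉ ptail.support := fun hmem => hwt (F2 w hw hmem)
      exact F3 w hw hwa hws z hz
  -- membership in image sets
  have hmemIm1 : ∀ (W : Finset V), W ⊆ K → ∀ x : V,
      (s(u,x) ∈ W.image (fun w => s(u,w)) ↔ x ∈ W) := by
    intro W hWK x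
    rw [Finset.mem_image]
    constructor
    · rintro ⟨w, hwW, hEq⟩
      rw [Sym2.eq_iff] at hEq
      rcases hEq with ⟨-, rfl⟩ | ⟨rfl, hwu⟩
      · exact hwW
      · exact absurd (hWK hwW) (hwu ▸ huK)
    · intro hx
      exact ⟨x, hx, rfl⟩
  have hmemIm2 : ∀ (W : Finset V), W ⊆ K → ∀ v x : V, v ≠ u →
      (s(v,x) ∈ W.image (fun w => s(u,w)) ↔ (v ∈ W ∧ x = u)) := by
    intro W hWK v x hvu
    rw [Finset.mem_image]
    constructor
    · rintro ⟨w, hwW, hEq⟩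
      rw [Sym2.eq_iff] at hEq
      rcases hEq with ⟨huv, -⟩ | ⟨hux, hwv⟩
      · exact absurd huv.symm hvu
      · exact ⟨hwv ▸ hwW, hux.symm⟩
    · rintro ⟨hvW, rfl⟩
      exact ⟨v, hvW, Sym2.eq_swap⟩
  set EK : Finset (Sym2 V) := K.image (fun w => s(u,w)) with hEK
  set h' : Sym2 V → ℕ := fun e => if e ∈ EK then 0 else h e with hh'
  have hd'le : ∀ e, h' e ≤ h e := by
    intro e
    simp only [hh']
    split_ifs <;> omega
  have hsua : 0 < h s(u,a) := ((hGadj u a).mp hadj.symm).2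
  have hlt : (∑ e, h' e) < ∑ e, h e := by
    refine Finset.sum_lt_sum (fun e _ => hd'le e) ⟨s(u,a), Finset.mem_univ _, ?_⟩
    rw [hh']
    simp only [if_pos (show s(u,a) ∈ EK from (hmemIm1 K le_rfl a).mpr haK)]
    omega
  have hdiag' : ∀ v : V, h' s(v,v) = 0 :=
    fun v => Nat.eq_zero_of_le_zero ((hdiag v) ▸ hd'le s(v,v))
  obtain ⟨A, B, X, hsum, hA, hB, hX⟩ := IH h' hlt hdiag'
  -- chi functions
  set chi : Finset V → Sym2 V → ℕ :=
    fun W e => if e ∈ W.image (fun w => s(u,w)) then 1 else 0 with hchi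
  have hdchi : ∀ (W : Finset V), W ⊆ K → ∀ v : V,
      (∑ x, chi W s(v,x)) = if v = u then W.card else (if v ∈ W then 1 else 0) := by
    intro W hWK v
    by_cases hvu : v = u
    · rw [if_pos hvu, hvu]
      have hterm : ∀ x : V, chi W s(u,x) = if x ∈ W then 1 else 0 := by
        intro x
        simp only [hchi]
        rw [if_congr (hmemIm1 W hWK x) rfl rfl]
      rw [Finset.sum_congr rfl fun x _ => hterm x]
      rw [Finset.sum_ite_mem, Finset.univ_inter, Finset.sum_const, smul_eq_mul, mul_one]
    · rw [if_neg hvu]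
      have hterm : ∀ x : V, chi W s(v,x) = if v ∈ W ∧ x = u then 1 else 0 := by
        intro x
        simp only [hchi]
        rw [if_congr (hmemIm2 W hWK v x hvu) rfl rfl]
      rw [Finset.sum_congr rfl fun x _ => hterm x]
      by_cases hvW : v ∈ W
      · simp [hvW]
      · simp [hvW]
  -- degrees in h'
  have hdegK0 : ∀ w ∈ K, (∑ x, h' s(w,x)) = 0 := by
    intro w hwK
    refine Finset.sum_eq_zero fun x _ => ?_
    by_contra hne
    have hxw : w ≠ x := by
      rintro rfl
      exact hne (hdiag' w)
    have hpos : 0 < h s(w,x) := by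
      have h1 := hd'le s(w,x)
      have h2 : 0 < h' s(w,x) := Nat.pos_of_ne_zero hne
      omega
    have hadjwx : G.Adj w x := (hGadj w x).mpr ⟨hxw, hpos⟩
    have hxu : x = u := hKleaf w hwK x hadjwx
    apply hne
    have hmemwu : s(w,u) ∈ EK := by
      rw [Sym2.eq_swap]
      exact (hmemIm1 K le_rfl w).mpr hwK
    rw [hxu]
    simp only [hh']
    simp [hmemwu]
  have hdegu1 : (∑ x, h' s(u,x)) ≤ 1 := by
    calc (∑ x, h' s(u,x)) ≤ ∑ x, (if x = t then 1 else 0) := by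
          refine Finset.sum_le_sum fun x _ => ?_
          by_cases hxt : x = t
          · rw [if_pos hxt]
            have hle1 := hd'le s(u,x)
            have hle2 := h2 s(u,x)
            omega
          · rw [if_neg hxt]
            by_cases hxu : x = u
            · have hz0 : h' s(u,x) = 0 := by rw [hxu]; exact hdiag' u
              omega
            · by_cases hadjux : G.Adj u x
              · have hxK : x ∈ K := by
                  rw [hK, Finset.mem_filter]
                  exact ⟨Finset.mem_univ _, hadjux, hxt⟩
                simp only [hh']
                simp [show s(u,x) ∈ EK from (hmemIm1 K le_rfl x).mpr hxK]
              · have : h s(u,x) = 0 := by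
                  by_contra hne
                  exact hadjux ((hGadj u x).mpr ⟨Ne.symm hxu, Nat.pos_of_ne_zero hne⟩)
                have := hd'le s(u,x)
                omega
      _ = 1 := by simp
  have hdegsum : ∀ v, (∑ x, A s(v,x)) + (∑ x, B s(v,x)) + (∑ x, X s(v,x))
      = ∑ x, h' s(v,x) := by
    intro v
    rw [← Finset.sum_add_distrib, ← Finset.sum_add_distrib]
    exact Finset.sum_congr rfl fun x _ => hsum _
  have hXu0 : (∑ x, X s(u,x)) = 0 := by
    have hXe := hX u
    have hds := hdegsum u
    obtain ⟨c, hc⟩ := hXe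
    omega
  have hABu : (∑ x, A s(u,x)) + (∑ x, B s(u,x)) ≤ 1 := by
    have := hdegsum u
    omega
  have hK0 : ∀ w ∈ K, (∑ x, A s(w,x)) = 0 ∧ (∑ x, B s(w,x)) = 0 := by
    intro w hw
    have h1 := hdegsum w
    rw [hdegK0 w hw] at h1
    omega
  -- the generic building step
  have build : ∀ (A1 B1 : Sym2 V → ℕ) (WA WB : Finset V),
      WA ∪ WB = K → Disjoint WA WB →
      (∀ e, A1 e + B1 e + X e = h' e) →
      (∀ v, Odd (∑ x, A1 s(v,x)) ∨ (∑ x, A1 s(v,x)) = 0) →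
      (∀ v, Odd (∑ x, B1 s(v,x)) ∨ (∑ x, B1 s(v,x)) = 0) →
      (∀ w ∈ K, (∑ x, A1 s(w,x)) = 0 ∧ (∑ x, B1 s(w,x)) = 0) →
      (((∑ x, A1 s(u,x)) + WA.card) % 2 = 1 ∨ ((∑ x, A1 s(u,x)) + WA.card) = 0) →
      (((∑ x, B1 s(u,x)) + WB.card) % 2 = 1 ∨ ((∑ x, B1 s(u,x)) + WB.card) = 0) →
      ∃ A2 B2 X2 : Sym2 V → ℕ,
        (∀ e, A2 e + B2 e + X2 e = h e) ∧
        (∀ v, Odd (∑ x, A2 s(v,x)) ∨ (∑ x, A2 s(v,x)) = 0) ∧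
        (∀ v, Odd (∑ x, B2 s(v,x)) ∨ (∑ x, B2 s(v,x)) = 0) ∧
        (∀ v, Even (∑ x, X2 s(v,x))) := by
    intro A1 B1 WA WB hun hdis hs1 hAo hBo hdeg0 hparA hparB
    have hWAK : WA ⊆ K := hun ▸ Finset.subset_union_left
    have hWBK : WB ⊆ K := hun ▸ Finset.subset_union_right
    refine ⟨fun e => A1 e + chi WA e, fun e => B1 e + chi WB e, X, ?_, ?_, ?_, hX⟩
    · intro e
      dsimp only
      have hs := hs1 e
      by_cases he : e ∈ EK
      · have h'0 : h' e = 0 := by simp only [hh']; simp [he]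
        rw [h'0] at hs
        obtain ⟨w, hwK, hEq⟩ := Finset.mem_image.mp (hEK ▸ he)
        subst hEq
        have hwu : w ≠ u := fun hEq2 => huK (hEq2 ▸ hwK)
        have hhe : h s(u,w) = 1 := by
          have := ((hGadj u w).mp (hKadj w hwK)).2
          have := h2 s(u,w)
          omega
        have hchiK : ∀ (W : Finset V), W ⊆ K → chi W s(u,w) = if w ∈ W then 1 else 0 := by
          intro W hWK
          simp only [hchi]
          rw [if_congr (hmemIm1 W hWK w) rfl rfl]
        rw [hchiK WA hWAK, hchiK WB hWBK, hhe]
        have hwmem : w ∈ WA ∪ WB := hun ▸ hwK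
        rw [Finset.mem_union] at hwmem
        have hnotboth : ¬(w ∈ WA ∧ w ∈ WB) := by
          rintro ⟨h1, h2'⟩
          exact (Finset.disjoint_left.mp hdis h1) h2'
        rcases hwmem with hw1 | hw2
        · rw [if_pos hw1, if_neg (fun hw2 => hnotboth ⟨hw1, hw2⟩)]
          omega
        · rw [if_neg (fun hw1 => hnotboth ⟨hw1, hw2⟩), if_pos hw2]
          omega
      · have h'e : h' e = h e := by simp only [hh']; simp [he]
        have hchinot : ∀ (W : Finset V), W ⊆ K → chi W e = 0 := by
          intro W hWK
          simp only [hchi]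
          rw [if_neg]
          intro hmem
          exact he (hEK ▸ Finset.image_subset_image hWK hmem)
        rw [hchinot WA hWAK, hchinot WB hWBK]
        omega
    · intro v
      dsimp only
      rw [Finset.sum_add_distrib, hdchi WA hWAK v]
      by_cases hvu : v = u
      · subst hvu
        rw [if_pos rfl]
        rcases hparA with hpar | hpar
        · exact Or.inl (Nat.odd_iff.mpr hpar)
        · exact Or.inr hpar
      · rw [if_neg hvu]
        by_cases hvW : v ∈ WA
        · rw [if_pos hvW, (hdeg0 v (hWAK hvW)).1]
          exact Or.inl odd_one
        · rw [if_neg hvW, add_zero]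
          exact hAo v
    · intro v
      dsimp only
      rw [Finset.sum_add_distrib, hdchi WB hWBK v]
      by_cases hvu : v = u
      · subst hvu
        rw [if_pos rfl]
        rcases hparB with hpar | hpar
        · exact Or.inl (Nat.odd_iff.mpr hpar)
        · exact Or.inr hpar
      · rw [if_neg hvu]
        by_cases hvW : v ∈ WB
        · rw [if_pos hvW, (hdeg0 v (hWBK hvW)).2]
          exact Or.inl odd_one
        · rw [if_neg hvW, add_zero]
          exact hBo v
  -- case analysis
  have hkpos : 0 < K.card := Finset.card_pos.mpr ⟨a, haK⟩
  set α := ∑ x, A s(u,x) with hα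
  set β := ∑ x, B s(u,x) with hβ
  have hcases : (α = 0 ∧ β = 0) ∨ (α = 1 ∧ β = 0) ∨ (α = 0 ∧ β = 1) := by omega
  rcases Nat.even_or_odd K.card with hke | hko
  · -- K.card even
    obtain ⟨c, hc⟩ := hke
    rcases hcases with ⟨hA0, hB0⟩ | ⟨hA1, hB0⟩ | ⟨hA0, hB1⟩
    · -- split off a
      have hcard1 : ({a} : Finset V).card = 1 := Finset.card_singleton a
      have hcard2 : (K \ {a}).card = K.card - 1 :=
        Finset.card_sdiff_of_subset (Finset.singleton_subset_iff.mpr haK)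
      refine build A B (K \ {a}) {a} ?_ ?_ hsum hA hB hK0 ?_ ?_
      · exact Finset.sdiff_union_of_subset (Finset.singleton_subset_iff.mpr haK)
      · exact Finset.sdiff_disjoint
      · left; rw [← hα, hA0, hcard2]; omega
      · left; rw [← hβ, hB0, hcard1]
    · refine build A B K ∅ (Finset.union_empty K) (Finset.disjoint_empty_right _)
        hsum hA hB hK0 ?_ ?_
      · left; rw [← hα, hA1]; omega
      · right; rw [← hβ, hB0]; simp
    · refine build A B ∅ K (Finset.empty_union K) (Finset.disjoint_empty_left _)
        hsum hA hB hK0 ?_ ?_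
      · right; rw [← hα, hA0]; simp
      · left; rw [← hβ, hB1]; omega
  · -- K.card odd
    obtain ⟨c, hc⟩ := hko
    rcases hcases with ⟨hA0, hB0⟩ | ⟨hA1, hB0⟩ | ⟨hA0, hB1⟩
    · refine build A B K ∅ (Finset.union_empty K) (Finset.disjoint_empty_right _)
        hsum hA hB hK0 ?_ ?_
      · left; rw [← hα, hA0]; omega
      · right; rw [← hβ, hB0]; simp
    · refine build A B ∅ K (Finset.empty_union K) (Finset.disjoint_empty_left _)
        hsum hA hB hK0 ?_ ?_
      · left; rw [← hα, hA1]; simp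
      · left; rw [← hβ, hB0]; omega
    · refine build A B K ∅ (Finset.union_empty K) (Finset.disjoint_empty_right _)
        hsum hA hB hK0 ?_ ?_
      · left; rw [← hα, hA0]; omega
      · left; rw [← hβ, hB1]; simp

private lemma main_decomp (N : ℕ) :
    ∀ h : Sym2 V → ℕ, (∑ e, h e) ≤ N → (∀ v : V, h s(v,v) = 0) →
    ∃ A B X : Sym2 V → ℕ,
      (∀ e, A e + B e + X e = h e) ∧
      (∀ v, Odd (∑ u, A s(v,u)) ∨ (∑ u, A s(v,u)) = 0) ∧
      (∀ v, Odd (∑ u, B s(v,u)) ∨ (∑ u, B s(v,u)) = 0) ∧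
      (∀ v, Even (∑ u, X s(v,u))) := by
  induction N using Nat.strong_induction_on with
  | _ N IH =>
  intro h hN hdiag
  classical
  by_cases hz : ∀ e, h e = 0
  · exact ⟨fun _ => 0, fun _ => 0, fun _ => 0, fun e => by simp [hz e],
      fun v => Or.inr (by simp), fun v => Or.inr (by simp), fun v => by simp⟩
  by_cases h2 : ∃ e0, 2 ≤ h e0
  · obtain ⟨e0, he0⟩ := h2
    set h' : Sym2 V → ℕ := fun e => if e = e0 then h e - 2 else h e with hh'
    have hle : ∀ e, h' e ≤ h e := by
      intro e
      by_cases he : e = e0 <;> simp [hh', he]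
    have hlt : (∑ e, h' e) < ∑ e, h e :=
      Finset.sum_lt_sum (fun e _ => hle e)
        ⟨e0, Finset.mem_univ _, by simp only [hh', if_pos rfl]; omega⟩
    have hdiag' : ∀ v, h' s(v,v) = 0 := by
      intro v
      by_cases he : s(v,v) = e0
      · rw [← he] at he0; rw [hdiag v] at he0; omega
      · simp [hh', he, hdiag v]
    obtain ⟨A, B, X, hsum, hA, hB, hX⟩ :=
      IH _ (lt_of_lt_of_le hlt hN) h' le_rfl hdiag'
    refine ⟨A, B, fun e => X e + (if e = e0 then 2 else 0), ?_, hA, hB, ?_⟩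
    · intro e
      have := hsum e
      by_cases he : e = e0
      · subst he
        simp only [hh', if_pos rfl, if_true] at this ⊢
        omega
      · simp only [hh', if_neg he] at this ⊢
        omega
    · intro v
      rw [Finset.sum_add_distrib]
      refine (hX v).add ?_
      have : (∑ u, (if s(v,u) = e0 then 2 else 0)) = 2 * ∑ u, (if s(v,u) = e0 then 1 else 0) := by
        rw [Finset.mul_sum]
        exact Finset.sum_congr rfl fun u _ => by split_ifs <;> omega
      rw [this]
      exact even_two_mul _
  -- now all multiplicities ≤ 1
  push_neg at h2
  set G := multigraphSimple h with hG
  by_cases hac : G.IsAcyclic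
  · push_neg at hz
    exact acyclic_case h hdiag h2 hz hac
      (fun h' hlt hd => IH (∑ e, h' e) (lt_of_lt_of_le hlt hN) h' le_rfl hd)
  · -- a cycle exists; remove it
    rw [SimpleGraph.IsAcyclic] at hac
    push_neg at hac
    obtain ⟨v0, q, hq⟩ := hac
    set X0 : Sym2 V → ℕ := fun e => q.edges.count e with hX0
    have hnodup : q.edges.Nodup := hq.isCircuit.isTrail.edges_nodup
    have hX0le : ∀ e, X0 e ≤ h e := by
      intro e
      by_cases hmem : e ∈ q.edges
      · have h1 : 0 < h e := multigraphSimple_edge (q.edges_subset_edgeSet hmem)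
        have h2' : X0 e ≤ 1 := List.nodup_iff_count_le_one.mp hnodup e
        omega
      · simp [hX0, List.count_eq_zero_of_not_mem hmem]
    obtain ⟨e1, he1⟩ : ∃ e, e ∈ q.edges := by
      rcases hqe : q.edges with _ | ⟨a, l⟩
      · exfalso
        have h3 := hq.three_le_length
        have hlen : q.edges.length = 0 := by rw [hqe]; rfl
        rw [Walk.length_edges] at hlen
        omega
      · exact ⟨a, by simp [hqe]⟩
    set h'' : Sym2 V → ℕ := fun e => h e - X0 e with hh''
    have hlt : (∑ e, h'' e) < ∑ e, h e := by
      refine Finset.sum_lt_sum (fun e _ => by simp only [hh'']; omega)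
        ⟨e1, Finset.mem_univ _, ?_⟩
      have hc : 0 < X0 e1 := by
        simp only [hX0]
        exact List.count_pos_iff.mpr he1
      have := hX0le e1
      simp only [hh'']
      omega
    have hdiag'' : ∀ v, h'' s(v,v) = 0 := by
      intro v
      have := hdiag v
      simp only [hh'']
      omega
    obtain ⟨A, B, X, hsum, hA, hB, hX⟩ :=
      IH _ (lt_of_lt_of_le hlt hN) h'' le_rfl hdiag''
    refine ⟨A, B, fun e => X e + X0 e, ?_, hA, hB, ?_⟩
    · intro e
      have hs := hsum e
      have hl := hX0le e
      simp only [hh''] at hs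
      show A e + B e + (X e + X0 e) = h e
      omega
    · intro v
      rw [Finset.sum_add_distrib]
      refine (hX v).add ?_
      rw [← zmod2_zero_iff, Nat.cast_sum]
      rw [walk_parity q v]
      split_ifs
      · decide
      · simp

end aux

/-- Every finite connected loopless multigraph with an even number of vertices
admits an odd edge coloring with at most 3 colors. -/
theorem multigraph_connected_even_oddChromaticIndex_le_three
    {V : Type*} [Fintype V] [DecidableEq V]
    (m : Sym2 V → ℕ) (hloopless : ∀ v : V, m s(v, v) = 0)
    (hconn : (multigraphSimple m).Connected) (heven : Even (Fintype.card V)) :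
    ∃ c : Sym2 V → Fin 3 → ℕ, IsOddMultiColoring m c := by
  classical
  obtain ⟨j, hjle, hjodd⟩ := exists_odd_subgraph m hconn heven
  set h : Sym2 V → ℕ := fun e => m e - j e with hh
  have hdiag : ∀ v, h s(v,v) = 0 := by
    intro v
    have := hjle s(v,v)
    simp only [hh]
    rw [hloopless v] at this ⊢
    omega
  obtain ⟨A, B, X, hsum, hA, hB, hX⟩ := main_decomp (∑ e, h e) h le_rfl hdiag
  refine ⟨fun e => ![j e + X e, A e, B e], ?_, ?_⟩
  · intro e
    rw [Fin.sum_univ_three]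
    simp only [Matrix.cons_val_zero, Matrix.cons_val_one, Matrix.head_cons,
      Matrix.cons_val_two, Matrix.tail_cons]
    have hs := hsum e
    have hl := hjle e
    simp only [hh] at hs
    omega
  · intro i v
    fin_cases i
    · left
      have h2 := (hjodd v).add_even (hX v)
      rw [← Finset.sum_add_distrib] at h2
      simpa using h2
    · simpa using hA v
    · simpa using hB v
end

section
/- Every finite connected simple graph G with an even number of vertices contains a spanning subgraph H (on the same vertex set, with edge set a subset of the edges of G) in which every vertex has odd degree. -/
open Finset

lemma walk_parity_s6 {V : Type*} [DecidableEq V] {G : SimpleGraph V} {x y : V}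
    (w : G.Walk x y) (v : V) :
    ((w.edges.countP (fun s => decide (v ∈ s)) : ℕ) : ZMod 2)
      = (if v = x then 1 else 0) + (if v = y then 1 else 0) := by
  induction w with
  | nil =>
      simp only [SimpleGraph.Walk.edges_nil, List.countP_nil, Nat.cast_zero]
      split_ifs <;> decide
  | @cons a b c h p ih =>
      have hab : a ≠ b := h.ne
      simp only [SimpleGraph.Walk.edges_cons, List.countP_cons, Nat.cast_add, ih]
      by_cases hva : v = a <;> by_cases hvb : v = b <;>
        simp_all [Sym2.mem_iff] <;> split_ifs <;> simp_all <;> decide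

/-- Summing list counts over a finset of "edges at v" equals the countP. -/
lemma sum_count_eq_countP {V : Type*} [Fintype V] [DecidableEq V]
    (G : SimpleGraph V) [DecidableRel G.Adj] (v : V) (l : List (Sym2 V))
    (hl : ∀ e ∈ l, e ∈ G.edgeFinset) :
    ∑ e ∈ G.edgeFinset.filter (fun e => v ∈ e), l.count e
      = l.countP (fun s => decide (v ∈ s)) := by
  classical
  have h1 : ∀ e ∈ G.edgeFinset.filter (fun e => v ∈ e),
      l.count e = (l.filter (fun s => decide (v ∈ s))).count e := by
    intro e he
    rw [List.count_filter]
    simp [(Finset.mem_filter.mp he).2]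
  rw [Finset.sum_congr rfl h1]
  have h2 : (l.filter (fun s => decide (v ∈ s))).toFinset
      ⊆ G.edgeFinset.filter (fun e => v ∈ e) := by
    intro e he
    rw [List.mem_toFinset, List.mem_filter] at he
    exact Finset.mem_filter.mpr ⟨hl e he.1, by simpa using he.2⟩
  rw [← Finset.sum_subset h2 (fun e _ he => by
    rw [List.count_eq_zero]; simpa using he)]
  rw [List.sum_toFinset_count_eq_length, List.countP_eq_length_filter]

/-- Every finite connected simple graph with an even number of vertices contains a
spanning subgraph (given by a subset `E` of its edges) in which every vertex has
odd degree. -/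
theorem connected_even_order_exists_odd_spanning_subgraph
    {V : Type*} [Fintype V] [DecidableEq V]
    (G : SimpleGraph V) [DecidableRel G.Adj]
    (hconn : G.Connected) (heven : Even (Fintype.card V)) :
    ∃ E ⊆ G.edgeFinset, ∀ v : V, Odd ((E.filter (fun e => v ∈ e)).card) := by
  classical
  obtain ⟨k, hk⟩ := heven
  have hcard : Fintype.card V = Fintype.card (Fin k ⊕ Fin k) := by
    simp [hk, Fintype.card_sum]
  obtain ⟨σ⟩ := Fintype.card_eq.mp hcard
  set a : Fin k → V := fun i => σ.symm (Sum.inl i) with ha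
  set b : Fin k → V := fun i => σ.symm (Sum.inr i) with hb
  have w : ∀ i : Fin k, G.Walk (a i) (b i) := fun i => (hconn (a i) (b i)).some
  set g : Sym2 V → ZMod 2 := fun s => ∑ i : Fin k, ((w i).edges.count s : ZMod 2) with hg
  refine ⟨G.edgeFinset.filter (fun s => g s = 1), Finset.filter_subset _ _, ?_⟩
  intro v
  rw [← ZMod.natCast_eq_one_iff_odd]
  have hcomm : (G.edgeFinset.filter (fun s => g s = 1)).filter (fun e => v ∈ e)
      = (G.edgeFinset.filter (fun e => v ∈ e)).filter (fun s => g s = 1) := by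
    rw [Finset.filter_filter, Finset.filter_filter]
    exact Finset.filter_congr (fun e _ => and_comm)
  rw [hcomm]
  -- card of the filtered set equals the sum of g over edges at v
  have hsum : ((((G.edgeFinset.filter (fun e => v ∈ e)).filter
      (fun s => g s = 1)).card : ℕ) : ZMod 2)
      = ∑ e ∈ G.edgeFinset.filter (fun e => v ∈ e), g e := by
    rw [Finset.sum_filter_add_sum_filter_not (G.edgeFinset.filter (fun e => v ∈ e))
      (fun s => g s = 1) g |>.symm]
    have h0 : ∑ e ∈ (G.edgeFinset.filter (fun e => v ∈ e)).filter
        (fun s => ¬ g s = 1), g e = 0 := by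
      apply Finset.sum_eq_zero
      intro e he
      have := (Finset.mem_filter.mp he).2
      have hcases : ∀ x : ZMod 2, x = 0 ∨ x = 1 := by decide
      rcases hcases (g e) with h | h
      · exact h
      · exact absurd h this
    have h1 : ∑ e ∈ (G.edgeFinset.filter (fun e => v ∈ e)).filter
        (fun s => g s = 1), g e
        = (((G.edgeFinset.filter (fun e => v ∈ e)).filter (fun s => g s = 1)).card : ZMod 2) := by
      rw [Finset.sum_congr rfl (fun e he => (Finset.mem_filter.mp he).2)]
      simp
    rw [h0, h1, add_zero]
  rw [hsum, hg]
  rw [Finset.sum_comm]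
  have hinner : ∀ i : Fin k, ∑ e ∈ G.edgeFinset.filter (fun e => v ∈ e),
      (((w i).edges.count e : ℕ) : ZMod 2)
      = (if v = a i then 1 else 0) + (if v = b i then 1 else 0) := by
    intro i
    rw [← Nat.cast_sum, sum_count_eq_countP G v _ (fun e he => by
      simpa [SimpleGraph.mem_edgeFinset] using (w i).edges_subset_edgeSet he)]
    exact walk_parity_s6 (w i) v
  rw [Finset.sum_congr rfl (fun i _ => hinner i), Finset.sum_add_distrib]
  have hva : ∀ i, (v = a i) ↔ (σ v = Sum.inl i) := by
    intro i; rw [ha]; simp [Equiv.eq_symm_apply]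
  have hvb : ∀ i, (v = b i) ↔ (σ v = Sum.inr i) := by
    intro i; rw [hb]; simp [Equiv.eq_symm_apply]
  simp only [hva, hvb]
  rcases hσ : σ v with j | j <;>
    simp [Sum.inl.injEq, Sum.inr.injEq, Finset.sum_ite_eq, Finset.sum_ite_eq']
end
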